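/- Let K be a field equipped with an additive valuation ν : K → WithTop ℚ (so ν(x·y) = ν(x) + ν(y), ν(x + y) ≥ min(ν(x), ν(y)), ν(0) = ⊤, ν(1) = 0, and ν(x) ≠ ⊤ for x ≠ 0). Let M = ℤ^n and let φ : M → ℚ be an additive group homomorphism. Consider the group algebra K[M] (the algebra of finitely supported functions f : M → K with convolution product), and define w : K[M] → WithTop ℚ by w(0) = ⊤ and, for f ≠ 0, w(f) = min over u in the support of f of (ν(f(u)) + φ(u)). Then w is an additive valuation on K[M]: w(f·g) = w(f) + w(g) and w(f + g) ≥ min(w(f), w(g)) for all f, g ∈ K[M], with w(1) = 0 and w(0) = ⊤. -/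

import Mathlib

open Pi.Lex in
@[reducible]
noncomputable def lexInstAux (n : ℕ) : LinearOrder (Lex (Fin n → ℤ)) :=
  inferInstance

section helpers
variable {K : Type*} [Field K] (ν : K → WithTop ℚ)

private lemma nu_neg (hν_mul : ∀ x y : K, ν (x * y) = ν x + ν y) (hν1 : ν 1 = 0) :
    ∀ x : K, ν (-x) = ν x := by
  have hm1 : ν (-1 : K) = 0 := by
    have h := hν_mul (-1) (-1)
    rw [neg_mul_neg, one_mul, hν1] at h
    cases hm : ν (-1 : K) with
    | top => rw [hm, top_add] at h; exact absurd h (by simp)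
    | coe q =>
      rw [hm, ← WithTop.coe_add] at h
      have hq : (0 : ℚ) = q + q := by exact_mod_cast h
      norm_num [show q = 0 by linarith]
  intro x
  calc ν (-x) = ν ((-1) * x) := by rw [neg_one_mul]
  _ = ν (-1 : K) + ν x := hν_mul _ _
  _ = ν x := by rw [hm1, zero_add]

private lemma nu_add_left (hν_mul : ∀ x y : K, ν (x * y) = ν x + ν y)
    (hν_add : ∀ x y : K, min (ν x) (ν y) ≤ ν (x + y)) (hν1 : ν 1 = 0)
    {a b : K} (h : ν a < ν b) : ν (a + b) = ν a := by
  have hneg := nu_neg ν hν_mul hν1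
  refine le_antisymm ?_ ?_
  · have h2 := hν_add (a + b) (-b)
    rw [add_neg_cancel_right, hneg] at h2
    rcases le_total (ν (a + b)) (ν b) with hc | hc
    · rwa [min_eq_left hc] at h2
    · exact absurd ((min_eq_right hc) ▸ h2) (not_le.mpr h)
  · have h3 := hν_add a b
    rwa [min_eq_left h.le] at h3

private lemma nu_sum_ge (hν_add : ∀ x y : K, min (ν x) (ν y) ≤ ν (x + y)) (hν0 : ν 0 = ⊤)
    {ι : Type*} (s : Finset ι) (x : ι → K) (c d : WithTop ℚ)
    (h : ∀ i ∈ s, c ≤ ν (x i) + d) : c ≤ ν (∑ i ∈ s, x i) + d := by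
  induction s using Finset.cons_induction with
  | empty => simp [hν0]
  | cons a s ha ih =>
    rw [Finset.sum_cons]
    calc c ≤ min (ν (x a) + d) (ν (∑ i ∈ s, x i) + d) :=
        le_min (h a (Finset.mem_cons_self a s)) (ih fun i hi => h i (Finset.mem_cons_of_mem hi))
    _ = min (ν (x a)) (ν (∑ i ∈ s, x i)) + d := min_add_add_right _ _ _
    _ ≤ ν (x a + ∑ i ∈ s, x i) + d := add_le_add_left (hν_add _ _) d

private lemma nu_sum_gt (hν_add : ∀ x y : K, min (ν x) (ν y) ≤ ν (x + y)) (hν0 : ν 0 = ⊤)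
    {ι : Type*} (s : Finset ι) (x : ι → K) (c : WithTop ℚ) (hc : c < ⊤)
    (h : ∀ i ∈ s, c < ν (x i)) : c < ν (∑ i ∈ s, x i) := by
  induction s using Finset.cons_induction with
  | empty => simpa [hν0]
  | cons a s ha ih =>
    rw [Finset.sum_cons]
    exact lt_of_lt_of_le
      (lt_min (h a (Finset.mem_cons_self a s)) (ih fun i hi => h i (Finset.mem_cons_of_mem hi)))
      (hν_add _ _)

private lemma nu_sum_eq (hν_mul : ∀ x y : K, ν (x * y) = ν x + ν y)
    (hν_add : ∀ x y : K, min (ν x) (ν y) ≤ ν (x + y)) (hν0 : ν 0 = ⊤) (hν1 : ν 1 = 0)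
    {ι : Type*} [DecidableEq ι] (s : Finset ι) (x : ι → K) {i₀ : ι} (hi₀ : i₀ ∈ s) (hne : ν (x i₀) ≠ ⊤)
    (h : ∀ i ∈ s, i ≠ i₀ → ν (x i₀) < ν (x i)) : ν (∑ i ∈ s, x i) = ν (x i₀) := by
  rw [← Finset.add_sum_erase s x hi₀]
  exact nu_add_left ν hν_mul hν_add hν1
    (nu_sum_gt ν hν_add hν0 (s.erase i₀) x (ν (x i₀)) hne.lt_top
      (fun i hi => h i (Finset.mem_of_mem_erase hi) (Finset.ne_of_mem_erase hi)))

private lemma lex_cancel {α : Type*} [AddCommGroup α] [LinearOrder α] [IsOrderedAddMonoid α] {a b c d : α}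
    (h1 : a ≤ c) (h2 : b ≤ d) (h3 : a + b = c + d) : a = c ∧ b = d := by
  have hac : a = c := by
    rcases h1.lt_or_eq with h | h
    · exact absurd h3 (ne_of_lt (lt_of_lt_of_le (add_lt_add_left h b) (add_le_add_right h2 c)))
    · exact h
  subst hac
  exact ⟨rfl, add_left_cancel h3⟩

end helpers



/-- Given an additive valuation `ν` on a field `K` and an additive
homomorphism `φ : ℤⁿ → ℚ`, the map `w` on the group algebra `K[ℤⁿ]` defined by
`w 0 = ⊤` and `w f = min over the support of f of (ν (f u) + φ u)` is again an
additive valuation: it is multiplicative, satisfies the ultrametric inequality,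
and sends `1` to `0`. -/
theorem valuation_on_group_algebra
    {K : Type*} [Field K] {n : ℕ}
    (ν : K → WithTop ℚ)
    (hν_mul : ∀ x y : K, ν (x * y) = ν x + ν y)
    (hν_add : ∀ x y : K, min (ν x) (ν y) ≤ ν (x + y))
    (hν0 : ν 0 = ⊤) (hν1 : ν 1 = 0)
    (hν_ne : ∀ x : K, x ≠ 0 → ν x ≠ ⊤)
    (φ : (Fin n → ℤ) →+ ℚ)
    (w : AddMonoidAlgebra K (Fin n → ℤ) → WithTop ℚ)
    (hw0 : w 0 = ⊤)
    (hw : ∀ f : AddMonoidAlgebra K (Fin n → ℤ), ∀ hf : f ≠ 0,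
      w f = f.coeff.support.inf'
        (Finsupp.support_nonempty_iff.mpr (fun h => hf (AddMonoidAlgebra.coeff_injective h)))
        (fun m => ν (f.coeff m) + (φ m : WithTop ℚ))) :
    (∀ f g : AddMonoidAlgebra K (Fin n → ℤ), w (f * g) = w f + w g) ∧
    (∀ f g : AddMonoidAlgebra K (Fin n → ℤ), min (w f) (w g) ≤ w (f + g)) ∧
    w 1 = 0 := by
    classical
  -- w f is a lower bound for the values at every point
  have hle : ∀ (f : AddMonoidAlgebra K (Fin n → ℤ)), f ≠ 0 →
      ∀ m : Fin n → ℤ, w f ≤ ν (f.coeff m) + (φ m : WithTop ℚ) := by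
    intro f hf m
    by_cases hm : f.coeff m = 0
    · simp [hm, hν0]
    · rw [hw f hf]
      exact Finset.inf'_le _ (Finsupp.mem_support_iff.mpr hm)
  refine ⟨?_, ?_, ?_⟩
  · -- multiplicativity
    intro f g
    by_cases hf : f = 0
    · rw [hf, zero_mul, hw0, top_add]
    by_cases hg : g = 0
    · rw [hg, mul_zero, hw0, add_top]
    letI instL : LinearOrder (Lex (Fin n → ℤ)) := lexInstAux n
    have hSf : f.coeff.support.Nonempty := Finsupp.support_nonempty_iff.mpr (fun h => hf (AddMonoidAlgebra.coeff_injective h))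
    have hSg : g.coeff.support.Nonempty := Finsupp.support_nonempty_iff.mpr (fun h => hg (AddMonoidAlgebra.coeff_injective h))
    -- choose lexicographically maximal minimizers
    set F : (Fin n → ℤ) → WithTop ℚ := fun m => ν (f.coeff m) + (φ m : WithTop ℚ) with hF
    set G : (Fin n → ℤ) → WithTop ℚ := fun m => ν (g.coeff m) + (φ m : WithTop ℚ) with hG
    have hwf : w f = f.coeff.support.inf' hSf F := hw f hf
    have hwg : w g = g.coeff.support.inf' hSg G := hw g hg
    set Tf := f.coeff.support.filter (fun u => F u = w f) with hTfdef
    set Tg := g.coeff.support.filter (fun u => G u = w g) with hTgdef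
    have hTf : Tf.Nonempty := by
      obtain ⟨u, hu, hu'⟩ := Finset.exists_mem_eq_inf' hSf F
      exact ⟨u, Finset.mem_filter.mpr ⟨hu, by rw [hwf, hu']⟩⟩
    have hTg : Tg.Nonempty := by
      obtain ⟨u, hu, hu'⟩ := Finset.exists_mem_eq_inf' hSg G
      exact ⟨u, Finset.mem_filter.mpr ⟨hu, by rw [hwg, hu']⟩⟩
    obtain ⟨u₀, hu₀T, hu₀max⟩ := @Finset.exists_max_image (Lex (Fin n → ℤ)) (Fin n → ℤ)
      instL Tf (fun u => toLex u) hTf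
    obtain ⟨v₀, hv₀T, hv₀max⟩ := @Finset.exists_max_image (Lex (Fin n → ℤ)) (Fin n → ℤ)
      instL Tg (fun u => toLex u) hTg
    have hu₀S : u₀ ∈ f.coeff.support := (Finset.mem_filter.mp hu₀T).1
    have hv₀S : v₀ ∈ g.coeff.support := (Finset.mem_filter.mp hv₀T).1
    have hu₀val : F u₀ = w f := (Finset.mem_filter.mp hu₀T).2
    have hv₀val : G v₀ = w g := (Finset.mem_filter.mp hv₀T).2
    set m₀ : Fin n → ℤ := u₀ + v₀ with hm₀
    -- explicit convolution formula
    have hmulapply : ∀ x : Fin n → ℤ, (f * g).coeff x =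
        ∑ p ∈ f.coeff.support ×ˢ g.coeff.support, if p.1 + p.2 = x then f.coeff p.1 * g.coeff p.2 else 0 := by
      intro x
      rw [AddMonoidAlgebra.mul_apply, Finset.sum_product]
      rfl
    -- strict bounds at minimizers used for mult. lower bounds
    have hfin : ν (f.coeff u₀ * g.coeff v₀) = ν (f.coeff u₀) + ν (g.coeff v₀) := hν_mul _ _
    have hnetop : ν (f.coeff u₀ * g.coeff v₀) ≠ ⊤ := by
      rw [hfin]
      exact WithTop.add_ne_top.mpr
        ⟨hν_ne _ (Finsupp.mem_support_iff.mp hu₀S), hν_ne _ (Finsupp.mem_support_iff.mp hv₀S)⟩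
    -- wf + wg expressed via u₀, v₀
    have hwfwg : w f + w g = ν (f.coeff u₀) + ν (g.coeff v₀) + ((φ m₀ : ℚ) : WithTop ℚ) := by
      rw [← hu₀val, ← hv₀val, hF, hG]
      simp only [hm₀, map_add, WithTop.coe_add]
      rw [add_add_add_comm]
    -- the strict-minimum property of the pair (u₀, v₀)
    have hstrict : ∀ p ∈ f.coeff.support ×ˢ g.coeff.support, p ≠ ((u₀, v₀) : (Fin n → ℤ) × (Fin n → ℤ)) →
        ν (f.coeff u₀ * g.coeff v₀) < ν (if p.1 + p.2 = m₀ then f.coeff p.1 * g.coeff p.2 else 0) := by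
      rintro ⟨a, b⟩ hp hpne
      obtain ⟨haS, hbS⟩ := Finset.mem_product.mp hp
      split_ifs with hab
      · -- a + b = m₀
        have habT : ¬(a ∈ Tf ∧ b ∈ Tg) := by
          rintro ⟨haT, hbT⟩
          have h1 : toLex a ≤ toLex u₀ := hu₀max a haT
          have h2 : toLex b ≤ toLex v₀ := hv₀max b hbT
          have h3 : toLex a + toLex b = toLex u₀ + toLex v₀ := congrArg toLex hab
          obtain ⟨e1, e2⟩ := lex_cancel (α := Lex (Fin n → ℤ)) h1 h2 h3
          exact hpne (Prod.ext e1 e2)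
        have hFa : w f ≤ F a := hwf ▸ Finset.inf'_le F haS
        have hGb : w g ≤ G b := hwg ▸ Finset.inf'_le G hbS
        have hwfne : w f ≠ ⊤ := by
          rw [← hu₀val, hF]
          exact WithTop.add_ne_top.mpr ⟨hν_ne _ (Finsupp.mem_support_iff.mp hu₀S),
            WithTop.coe_ne_top⟩
        have hwgne : w g ≠ ⊤ := by
          rw [← hv₀val, hG]
          exact WithTop.add_ne_top.mpr ⟨hν_ne _ (Finsupp.mem_support_iff.mp hv₀S),
            WithTop.coe_ne_top⟩
        have hsum : w f + w g < F a + G b := by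
          rcases (not_and_or.mp habT) with hnot | hnot
          · have hlt : w f < F a := lt_of_le_of_ne hFa
              (fun hcontra => hnot (Finset.mem_filter.mpr ⟨haS, hcontra.symm⟩))
            calc w f + w g < F a + w g := (WithTop.add_lt_add_iff_right hwgne).mpr hlt
            _ ≤ F a + G b := add_le_add_right hGb _
          · have hlt : w g < G b := lt_of_le_of_ne hGb
              (fun hcontra => hnot (Finset.mem_filter.mpr ⟨hbS, hcontra.symm⟩))
            calc w f + w g < w f + G b := (WithTop.add_lt_add_iff_left hwfne).mpr hlt
            _ ≤ F a + G b := add_le_add_left hFa _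
        have hFG : F a + G b = ν (f.coeff a) + ν (g.coeff b) + ((φ m₀ : ℚ) : WithTop ℚ) := by
          rw [hF, hG]
          simp only [← hab, map_add, WithTop.coe_add]
          rw [add_add_add_comm]
        rw [hwfwg, hFG] at hsum
        rw [hfin, hν_mul]
        exact (WithTop.add_lt_add_iff_right WithTop.coe_ne_top).mp hsum
      · rw [hν0]
        exact lt_of_le_of_ne le_top hnetop
    -- value of the product at m₀
    have hval : ν ((f * g).coeff m₀) = ν (f.coeff u₀) + ν (g.coeff v₀) := by
      rw [hmulapply m₀]
      have hmem : ((u₀, v₀) : (Fin n → ℤ) × (Fin n → ℤ)) ∈ f.coeff.support ×ˢ g.coeff.support :=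
        Finset.mem_product.mpr ⟨hu₀S, hv₀S⟩
      have hif : (if (u₀, v₀).1 + (u₀, v₀).2 = m₀ then f.coeff (u₀, v₀).1 * g.coeff (u₀, v₀).2 else 0)
          = f.coeff u₀ * g.coeff v₀ := if_pos rfl
      have key := nu_sum_eq ν hν_mul hν_add hν0 hν1 (f.coeff.support ×ˢ g.coeff.support)
        (fun p => if p.1 + p.2 = m₀ then f.coeff p.1 * g.coeff p.2 else 0) hmem
        (by show ν (if (u₀, v₀).1 + (u₀, v₀).2 = m₀ then f.coeff (u₀, v₀).1 * g.coeff (u₀, v₀).2 else 0) ≠ ⊤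
            rw [hif]; exact hnetop)
        (fun p hp hpne => by
          show ν (if (u₀, v₀).1 + (u₀, v₀).2 = m₀ then f.coeff (u₀, v₀).1 * g.coeff (u₀, v₀).2 else 0)
            < ν (if p.1 + p.2 = m₀ then f.coeff p.1 * g.coeff p.2 else 0)
          rw [hif]; exact hstrict p hp hpne)
      rw [key]
      show ν (if (u₀, v₀).1 + (u₀, v₀).2 = m₀ then f.coeff (u₀, v₀).1 * g.coeff (u₀, v₀).2 else 0)
        = ν (f.coeff u₀) + ν (g.coeff v₀)
      rw [hif, hfin]
    have hne0 : (f * g).coeff m₀ ≠ 0 := by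
      intro h0
      rw [h0, hν0] at hval
      exact (WithTop.add_ne_top.mpr
        ⟨hν_ne _ (Finsupp.mem_support_iff.mp hu₀S),
         hν_ne _ (Finsupp.mem_support_iff.mp hv₀S)⟩) hval.symm
    have hfg : f * g ≠ 0 := by
      intro h
      exact hne0 (by rw [h]; rfl)
    refine le_antisymm ?_ ?_
    · -- w (f*g) ≤ w f + w g
      have := hle (f * g) hfg m₀
      rw [hval] at this
      rw [hwfwg]
      exact this
    · -- w f + w g ≤ w (f*g)
      rw [hw (f * g) hfg]
      apply Finset.le_inf'
      intro m hm
      rw [hmulapply m]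
      apply nu_sum_ge ν hν_add hν0
      rintro ⟨a, b⟩ hp
      obtain ⟨haS, hbS⟩ := Finset.mem_product.mp hp
      split_ifs with hab
      · have hFa : w f ≤ F a := hwf ▸ Finset.inf'_le F haS
        have hGb : w g ≤ G b := hwg ▸ Finset.inf'_le G hbS
        calc w f + w g ≤ F a + G b := add_le_add hFa hGb
        _ = ν (f.coeff a * g.coeff b) + ((φ m : ℚ) : WithTop ℚ) := by
            rw [hF, hG, hν_mul]
            simp only [← hab, map_add, WithTop.coe_add]
            rw [add_add_add_comm]
      · simp [hν0]
  · -- ultrametric inequality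
    intro f g
    by_cases hf : f = 0
    · rw [hf, zero_add, hw0]
      exact min_le_right _ _
    by_cases hg : g = 0
    · rw [hg, add_zero, hw0]
      exact min_le_left _ _
    by_cases hfg : f + g = 0
    · rw [hfg, hw0]
      exact le_top
    rw [hw (f + g) hfg]
    apply Finset.le_inf'
    intro m hm
    have h1 : w f ≤ ν (f.coeff m) + (φ m : WithTop ℚ) := hle f hf m
    have h2 : w g ≤ ν (g.coeff m) + (φ m : WithTop ℚ) := hle g hg m
    calc min (w f) (w g) ≤ min (ν (f.coeff m) + (φ m : WithTop ℚ)) (ν (g.coeff m) + (φ m : WithTop ℚ)) :=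
        min_le_min h1 h2
    _ = min (ν (f.coeff m)) (ν (g.coeff m)) + (φ m : WithTop ℚ) := min_add_add_right _ _ _
    _ ≤ ν (f.coeff m + g.coeff m) + (φ m : WithTop ℚ) := add_le_add_left (hν_add _ _) _
    _ = ν ((f + g).coeff m) + (φ m : WithTop ℚ) := by rw [AddMonoidAlgebra.coeff_add, Finsupp.add_apply]
  · -- w 1 = 0
    have h1 : (1 : AddMonoidAlgebra K (Fin n → ℤ)) ≠ 0 := one_ne_zero
    rw [hw 1 h1]
    have hsupp : (1 : AddMonoidAlgebra K (Fin n → ℤ)).coeff.support = {0} := by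
      rw [AddMonoidAlgebra.one_def]
      exact Finsupp.support_single_ne_zero 0 one_ne_zero
    have hone : (1 : AddMonoidAlgebra K (Fin n → ℤ)).coeff 0 = 1 := by
      rw [AddMonoidAlgebra.one_def]
      exact Finsupp.single_eq_same
    have hval0 : ν ((1 : AddMonoidAlgebra K (Fin n → ℤ)).coeff 0) + ((φ 0 : ℚ) : WithTop ℚ) = 0 := by
      rw [hone, hν1, map_zero]
      simp
    apply le_antisymm
    · have hmem : (0 : Fin n → ℤ) ∈ (1 : AddMonoidAlgebra K (Fin n → ℤ)).coeff.support := by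
        rw [hsupp]; exact Finset.mem_singleton_self 0
      exact le_of_le_of_eq (Finset.inf'_le _ hmem) hval0
    · apply Finset.le_inf'
      intro m hm
      rw [hsupp, Finset.mem_singleton] at hm
      subst hm
      exact le_of_eq hval0.symm
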